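/- Let A and B be vertices of X = J(v,k,i) and let x = |A ∩ B|. If k − Δ ≤ x < i, then the distance between A and B in X equals ⌈(k − x)/(k − i)⌉. -/

import Mathlib

/-- The generalized Johnson graph `J(v,k,i)`: vertices are the `k`-element subsets of a
`v`-element set, two vertices adjacent iff their intersection has exactly `i` elements. -/
def genJohnsonGraph (v k i : ℕ) :
    SimpleGraph {A : Finset (Fin v) // A.card = k} where
  Adj A B := A ≠ B ∧ (A.1 ∩ B.1).card = i
  symm := by
    refine ⟨?_⟩
    rintro A B ⟨hne, hcard⟩
    exact ⟨hne.symm, by rwa [Finset.inter_comm]⟩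
  loopless := ⟨by rintro A ⟨hne, -⟩; exact hne rfl⟩

/-- Along any walk the deficiency `k - |A ∩ B|` is at most `(k-i)` per step. -/
lemma gj_walk_bound {v k i : ℕ} (hik : i ≤ k) :
    ∀ {A B : {A : Finset (Fin v) // A.card = k}}
      (W : (genJohnsonGraph v k i).Walk A B),
      k - (A.1 ∩ B.1).card ≤ W.length * (k - i) := by
  intro A B W
  induction W with
  | @nil u =>
    simp only [SimpleGraph.Walk.length_nil, Finset.inter_self, Nat.zero_mul]
    have := u.2
    omega
  | @cons A C D h W ih =>
    have hAC := h.2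
    have hsub : C.1 ∩ D.1 ⊆ (A.1 ∩ D.1) ∪ (C.1 \ A.1) := by
      intro y hy
      simp only [Finset.mem_inter, Finset.mem_union, Finset.mem_sdiff] at *
      tauto
    have h1 : (C.1 ∩ D.1).card ≤ (A.1 ∩ D.1).card + (C.1 \ A.1).card :=
      le_trans (Finset.card_le_card hsub) (Finset.card_union_le _ _)
    have h2 : (C.1 ∩ A.1).card + (C.1 \ A.1).card = C.1.card :=
      Finset.card_inter_add_card_sdiff _ _
    have h3 : (C.1 ∩ A.1).card = i := by rwa [Finset.inter_comm]
    have h4 : C.1.card = k := C.2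
    simp only [SimpleGraph.Walk.length_cons]
    have hm : (W.length + 1) * (k - i) = W.length * (k - i) + (k - i) := by ring
    omega

set_option maxHeartbeats 1000000 in
/-- One intermediate vertex when `2i ≤ x + k`. -/
lemma gj_base {v k i : ℕ} (hik : i < k) (h2k : 2 * k ≤ v)
    (A B : Finset (Fin v)) (hA : A.card = k) (hB : B.card = k)
    (hxd : k - (v - 2 * k + 2 * i) ≤ (A ∩ B).card) (hxi : (A ∩ B).card < i)
    (hx2 : 2 * i ≤ (A ∩ B).card + k) :
    ∃ C : Finset (Fin v), C.card = k ∧ (A ∩ C).card = i ∧ (C ∩ B).card = i := by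
  set x := (A ∩ B).card with hx
  have hxA : (A ∩ B).card + (A \ B).card = A.card := Finset.card_inter_add_card_sdiff _ _
  have hxB : (B ∩ A).card + (B \ A).card = B.card := Finset.card_inter_add_card_sdiff _ _
  have hBA : (B ∩ A).card = x := by rw [Finset.inter_comm]
  have hcu : (A ∪ B).card = 2 * k - x := by
    have := Finset.card_union_add_card_inter A B
    omega
  have hcompl : ((Finset.univ : Finset (Fin v)) \ (A ∪ B)).card = v - (2 * k - x) := by
    rw [Finset.card_sdiff_of_subset (Finset.subset_univ _), hcu]
    simp
  -- parameters
  set p := 2 * i - k with hp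
  set s := i - p with hs
  set o := k - 2 * i with ho
  obtain ⟨P, hPsub, hPcard⟩ : ∃ P ⊆ A ∩ B, P.card = p :=
    Finset.exists_subset_card_eq (by omega)
  obtain ⟨S, hSsub, hScard⟩ : ∃ S ⊆ A \ B, S.card = s :=
    Finset.exists_subset_card_eq (by omega)
  obtain ⟨T, hTsub, hTcard⟩ : ∃ T ⊆ B \ A, T.card = s :=
    Finset.exists_subset_card_eq (by omega)
  obtain ⟨O, hOsub, hOcard⟩ : ∃ O ⊆ (Finset.univ : Finset (Fin v)) \ (A ∪ B), O.card = o :=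
    Finset.exists_subset_card_eq (by omega)
  -- pointwise membership facts
  have hPA : ∀ a ∈ P, a ∈ A := fun a ha => (Finset.mem_inter.1 (hPsub ha)).1
  have hPB : ∀ a ∈ P, a ∈ B := fun a ha => (Finset.mem_inter.1 (hPsub ha)).2
  have hSA : ∀ a ∈ S, a ∈ A := fun a ha => (Finset.mem_sdiff.1 (hSsub ha)).1
  have hSB : ∀ a ∈ S, a ∉ B := fun a ha => (Finset.mem_sdiff.1 (hSsub ha)).2
  have hTB : ∀ a ∈ T, a ∈ B := fun a ha => (Finset.mem_sdiff.1 (hTsub ha)).1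
  have hTA : ∀ a ∈ T, a ∉ A := fun a ha => (Finset.mem_sdiff.1 (hTsub ha)).2
  have hOA : ∀ a ∈ O, a ∉ A := fun a ha hb =>
    (Finset.mem_sdiff.1 (hOsub ha)).2 (Finset.mem_union_left _ hb)
  have hOB : ∀ a ∈ O, a ∉ B := fun a ha hb =>
    (Finset.mem_sdiff.1 (hOsub ha)).2 (Finset.mem_union_right _ hb)
  -- disjointness
  have hPS : Disjoint P S := Finset.disjoint_left.2 fun a ha hb => hSB a hb (hPB a ha)
  have hPT : Disjoint P T := Finset.disjoint_left.2 fun a ha hb => hTA a hb (hPA a ha)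
  have hPO : Disjoint P O := Finset.disjoint_left.2 fun a ha hb => hOA a hb (hPA a ha)
  have hST : Disjoint S T := Finset.disjoint_left.2 fun a ha hb => hTA a hb (hSA a ha)
  have hSO : Disjoint S O := Finset.disjoint_left.2 fun a ha hb => hOA a hb (hSA a ha)
  have hTO : Disjoint T O := Finset.disjoint_left.2 fun a ha hb => hOB a hb (hTB a ha)
  refine ⟨P ∪ S ∪ T ∪ O, ?_, ?_, ?_⟩
  · rw [Finset.card_union_of_disjoint
      (Finset.disjoint_union_left.2 ⟨Finset.disjoint_union_left.2 ⟨hPO, hSO⟩, hTO⟩),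
      Finset.card_union_of_disjoint (Finset.disjoint_union_left.2 ⟨hPT, hST⟩),
      Finset.card_union_of_disjoint hPS]
    omega
  · have hAC : A ∩ (P ∪ S ∪ T ∪ O) = P ∪ S := by
      ext a
      simp only [Finset.mem_inter, Finset.mem_union]
      have h1 := hPA a; have h2 := hSA a; have h3 := hTA a; have h4 := hOA a
      tauto
    rw [hAC, Finset.card_union_of_disjoint hPS]
    omega
  · have hCB : (P ∪ S ∪ T ∪ O) ∩ B = P ∪ T := by
      ext a
      simp only [Finset.mem_inter, Finset.mem_union]
      have h1 := hPB a; have h2 := hSB a; have h3 := hTB a; have h4 := hOB a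
      tauto
    rw [hCB, Finset.card_union_of_disjoint hPT]
    omega

/-- One step increasing the intersection by `k - i`. -/
lemma gj_step {v k i : ℕ} (hik : i < k)
    (A B : Finset (Fin v)) (hA : A.card = k) (hB : B.card = k)
    (hxi : (A ∩ B).card < i) :
    ∃ A' : Finset (Fin v), A'.card = k ∧ (A ∩ A').card = i ∧
      (A' ∩ B).card = (A ∩ B).card + (k - i) := by
  set x := (A ∩ B).card with hx
  have hxA : (A ∩ B).card + (A \ B).card = A.card := Finset.card_inter_add_card_sdiff _ _
  have hxB : (B ∩ A).card + (B \ A).card = B.card := Finset.card_inter_add_card_sdiff _ _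
  have hBA : (B ∩ A).card = x := by rw [Finset.inter_comm]
  obtain ⟨S, hSsub, hScard⟩ : ∃ S ⊆ A \ B, S.card = k - i :=
    Finset.exists_subset_card_eq (by omega)
  obtain ⟨T, hTsub, hTcard⟩ : ∃ T ⊆ B \ A, T.card = k - i :=
    Finset.exists_subset_card_eq (by omega)
  have hSA : ∀ a ∈ S, a ∈ A := fun a ha => (Finset.mem_sdiff.1 (hSsub ha)).1
  have hSB : ∀ a ∈ S, a ∉ B := fun a ha => (Finset.mem_sdiff.1 (hSsub ha)).2
  have hTB : ∀ a ∈ T, a ∈ B := fun a ha => (Finset.mem_sdiff.1 (hTsub ha)).1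
  have hTA : ∀ a ∈ T, a ∉ A := fun a ha => (Finset.mem_sdiff.1 (hTsub ha)).2
  have hSA' : S ⊆ A := fun a ha => hSA a ha
  refine ⟨(A \ S) ∪ T, ?_, ?_, ?_⟩
  · rw [Finset.card_union_of_disjoint
      (Finset.disjoint_left.2 fun a ha hb => hTA a hb (Finset.mem_sdiff.1 ha).1),
      Finset.card_sdiff_of_subset hSA']
    omega
  · have hAA' : A ∩ ((A \ S) ∪ T) = A \ S := by
      ext a
      simp only [Finset.mem_inter, Finset.mem_union, Finset.mem_sdiff]
      have h3 := hTA a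
      tauto
    rw [hAA', Finset.card_sdiff_of_subset hSA']
    omega
  · have hA'B : ((A \ S) ∪ T) ∩ B = (A ∩ B) ∪ T := by
      ext a
      simp only [Finset.mem_inter, Finset.mem_union, Finset.mem_sdiff]
      have h1 := hSB a; have h2 := hTB a
      tauto
    have hd : Disjoint (A ∩ B) T :=
      Finset.disjoint_left.2 fun a ha hb => hTA a hb (Finset.mem_inter.1 ha).1
    rw [hA'B, Finset.card_union_of_disjoint hd, hTcard]

/-- Existence of a walk of the right length. -/
lemma gj_exists_walk {v k i : ℕ} (hik : i < k) (h2k : 2 * k ≤ v) :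
    ∀ (n : ℕ) (A B : {A : Finset (Fin v) // A.card = k}),
      i - (A.1 ∩ B.1).card ≤ n →
      k - (v - 2 * k + 2 * i) ≤ (A.1 ∩ B.1).card →
      (A.1 ∩ B.1).card < i →
      ∃ W : (genJohnsonGraph v k i).Walk A B,
        W.length = (k - (A.1 ∩ B.1).card) ⌈/⌉ (k - i) := by
  intro n
  induction n with
  | zero => intro A B h1 _ h3; omega
  | succ n ih =>
    intro A B h1 hxd hxi
    set x := (A.1 ∩ B.1).card with hx
    have hxk : x ≤ k := by
      have h := Finset.card_le_card (Finset.inter_subset_left : A.1 ∩ B.1 ⊆ A.1)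
      rw [A.2] at h
      exact h
    by_cases hcase : 2 * i ≤ x + k
    · -- distance 2
      obtain ⟨C, hCcard, hAC, hCB⟩ := gj_base hik h2k A.1 B.1 A.2 B.2 hxd hxi hcase
      have hACne : A ≠ (⟨C, hCcard⟩ : {A : Finset (Fin v) // A.card = k}) := by
        intro h
        have : (A.1 ∩ C).card = k := by
          rw [h]; simp [hCcard]
        omega
      have hCBne : (⟨C, hCcard⟩ : {A : Finset (Fin v) // A.card = k}) ≠ B := by
        intro h
        have : (C ∩ B.1).card = k := by
          conv_lhs => rw [show C = (⟨C, hCcard⟩ : {A : Finset (Fin v) // A.card = k}).1 from rfl, h]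
          simp [B.2]
        omega
      have hadj1 : (genJohnsonGraph v k i).Adj A ⟨C, hCcard⟩ := ⟨hACne, hAC⟩
      have hadj2 : (genJohnsonGraph v k i).Adj ⟨C, hCcard⟩ B := ⟨hCBne, hCB⟩
      refine ⟨SimpleGraph.Walk.cons hadj1
        (SimpleGraph.Walk.cons hadj2 SimpleGraph.Walk.nil), ?_⟩
      simp only [SimpleGraph.Walk.length_cons, SimpleGraph.Walk.length_nil]
      rw [Nat.ceilDiv_eq_add_pred_div]
      have h2 : (k - x + (k - i) - 1) / (k - i) = 2 :=
        Nat.div_eq_of_lt_le (by omega) (by omega)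
      omega
    · -- step, then induct
      obtain ⟨A', hA'card, hAA', hA'B⟩ := gj_step hik A.1 B.1 A.2 B.2 hxi
      set A'' : {A : Finset (Fin v) // A.card = k} := ⟨A', hA'card⟩ with hA''
      have hne : A ≠ A'' := by
        intro h
        have : (A.1 ∩ A').card = k := by
          rw [h]; simp [hA'', hA'card]
        omega
      have hx' : (A''.1 ∩ B.1).card = x + (k - i) := hA'B
      obtain ⟨W, hW⟩ := ih A'' B (by omega) (by omega) (by omega)
      have hadj : (genJohnsonGraph v k i).Adj A A'' := ⟨hne, hAA'⟩
      refine ⟨SimpleGraph.Walk.cons hadj W, ?_⟩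
      simp only [SimpleGraph.Walk.length_cons, hW, hx']
      rw [Nat.ceilDiv_eq_add_pred_div, Nat.ceilDiv_eq_add_pred_div]
      have hb : 0 < k - i := by omega
      have h1' : k - (x + (k - i)) + (k - i) - 1 = k - x - 1 := by omega
      have h2' : k - x + (k - i) - 1 = (k - x - 1) + (k - i) := by omega
      rw [h1', h2', Nat.add_div_right _ hb]

/-- If `k - Δ ≤ x = |A ∩ B| < i`, then `dist(A,B) = ⌈(k - x)/(k - i)⌉` in `J(v,k,i)`. -/
theorem dist_eq_ceil (v k i : ℕ) (hik : i < k) (hkv : k < v)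
    (h2k : 2 * k ≤ v) (hexc : ¬(v = 2 * k ∧ i = 0))
    (A B : {A : Finset (Fin v) // A.card = k})
    (hxd : k - (v - 2 * k + 2 * i) ≤ (A.1 ∩ B.1).card)
    (hxi : (A.1 ∩ B.1).card < i) :
    (genJohnsonGraph v k i).dist A B = (k - (A.1 ∩ B.1).card) ⌈/⌉ (k - i) := by
  obtain ⟨W, hW⟩ := gj_exists_walk hik h2k (i - (A.1 ∩ B.1).card) A B le_rfl hxd hxi
  have hub : (genJohnsonGraph v k i).dist A B ≤ (k - (A.1 ∩ B.1).card) ⌈/⌉ (k - i) :=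
    hW ▸ SimpleGraph.dist_le W
  have hreach : (genJohnsonGraph v k i).Reachable A B := ⟨W⟩
  obtain ⟨W0, hW0⟩ := hreach.exists_walk_length_eq_dist
  have hbd := gj_walk_bound (le_of_lt hik) W0
  rw [hW0] at hbd
  have hlb : (k - (A.1 ∩ B.1).card) ⌈/⌉ (k - i) ≤ (genJohnsonGraph v k i).dist A B := by
    rw [ceilDiv_le_iff_le_mul (show 0 < k - i by omega)]
    have := Nat.mul_comm (k - i) ((genJohnsonGraph v k i).dist A B)
    omega
  omega
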